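/- Let X ∈ B(L²(𝕋)) satisfy X M_z P₊ = M_z X P₊. Then φ := X(1) satisfies φ ∈ L∞(𝕋) with ‖φ‖_∞ ≤ ‖X‖, and X f = φ f for all f ∈ H²(𝕋), i.e. X P₊ = M_φ P₊. -/

import Mathlib

open MeasureTheory Complex AddCircle
open scoped InnerProductSpace ENNReal Real

noncomputable section

namespace PaperTH

instance fact2pi : Fact (0 < 2 * Real.pi) := ⟨by positivity⟩

/-- The circle, as `ℝ / 2πℤ`. -/
abbrev 𝕋c := AddCircle (2 * Real.pi)

/-- The normalized Lebesgue (Haar) measure on the circle. -/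
abbrev μc : Measure 𝕋c := haarAddCircle

/-- `L²(𝕋)`. -/
abbrev L2 := Lp ℂ 2 μc

/-- The Hardy space `H²(𝕋)`: members of `L²(𝕋)` all of whose Fourier coefficients of
negative index vanish. -/
def Hardy : Submodule ℂ L2 where
  carrier := {f | ∀ n : ℤ, n < 0 → fourierCoeff (⇑f) n = 0}
  add_mem' := by
    intro f g hf hg n hn
    have hf' := hf n hn
    have hg' := hg n hn
    rw [← fourierBasis_repr] at hf' hg' ⊢
    rw [map_add, lp.coeFn_add, Pi.add_apply, hf', hg', add_zero]
  zero_mem' := by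
    intro n hn
    rw [← fourierBasis_repr, map_zero, lp.coeFn_zero, Pi.zero_apply]
  smul_mem' := by
    intro c f hf n hn
    have hf' := hf n hn
    rw [← fourierBasis_repr] at hf' ⊢
    rw [_root_.map_smul, lp.coeFn_smul, Pi.smul_apply, hf', smul_zero]

theorem isClosed_Hardy : IsClosed (Hardy : Set L2) := by
  have h : (Hardy : Set L2) =
      ⋂ (n : ℤ) (_ : n < 0), ((innerSL ℂ (fourierBasis n)) ⁻¹' {(0 : ℂ)}) := by
    ext f
    simp only [Set.mem_iInter, Set.mem_preimage, Set.mem_singleton_iff, SetLike.mem_coe]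
    constructor
    · intro hf n hn
      have := hf n hn
      rw [← fourierBasis_repr, fourierBasis.repr_apply_apply] at this
      simpa using this
    · intro hf n hn
      have := hf n hn
      rw [← fourierBasis_repr, fourierBasis.repr_apply_apply]
      simpa using this
  rw [h]
  exact isClosed_iInter fun n => isClosed_iInter fun _ =>
    (isClosed_singleton).preimage (innerSL ℂ (fourierBasis n)).continuous

instance : CompleteSpace Hardy := isClosed_Hardy.completeSpace_coe

/-- The Szegő projection `P₊ : L²(𝕋) → L²(𝕋)` onto the Hardy space. -/
def Pplus : L2 →L[ℂ] L2 := Hardy.subtypeL.comp (Submodule.orthogonalProjectionOnto Hardy)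

/-- `P₋ = I - P₊`. -/
def Pminus : L2 →L[ℂ] L2 := ContinuousLinearMap.id ℂ L2 - Pplus

/-- Underlying function of the multiplication operator. -/
def MopFun (φ : 𝕋c → ℂ) (hφ : MemLp φ ∞ μc) (f : L2) : L2 :=
  ((Lp.memLp f).smul hφ).toLp (φ • ⇑f)

theorem MopFun_coeFn (φ : 𝕋c → ℂ) (hφ : MemLp φ ∞ μc) (f : L2) :
    ⇑(MopFun φ hφ f) =ᵐ[μc] φ • ⇑f := MemLp.coeFn_toLp _

theorem MopFun_add (φ : 𝕋c → ℂ) (hφ : MemLp φ ∞ μc) (f g : L2) :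
    MopFun φ hφ (f + g) = MopFun φ hφ f + MopFun φ hφ g := by
  apply Lp.ext
  filter_upwards [MopFun_coeFn φ hφ (f + g), MopFun_coeFn φ hφ f, MopFun_coeFn φ hφ g,
    Lp.coeFn_add f g, Lp.coeFn_add (MopFun φ hφ f) (MopFun φ hφ g)] with x h1 h2 h3 h4 h5
  simp only [h1, h5, Pi.add_apply, h2, h3, Pi.smul_apply, Pi.mul_apply, smul_eq_mul, h4]
  ring

theorem MopFun_smul (φ : 𝕋c → ℂ) (hφ : MemLp φ ∞ μc) (c : ℂ) (f : L2) :
    MopFun φ hφ (c • f) = c • MopFun φ hφ f := by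
  apply Lp.ext
  filter_upwards [MopFun_coeFn φ hφ (c • f), MopFun_coeFn φ hφ f,
    Lp.coeFn_smul c f, Lp.coeFn_smul c (MopFun φ hφ f)] with x h1 h2 h3 h4
  simp only [h1, h4, Pi.smul_apply, Pi.mul_apply, h2, h3, smul_eq_mul]
  ring

theorem MopFun_norm (φ : 𝕋c → ℂ) (hφ : MemLp φ ∞ μc) (f : L2) :
    ‖MopFun φ hφ f‖ ≤ (eLpNorm φ ∞ μc).toReal * ‖f‖ := by
  have hrfl : MopFun φ hφ f = ((Lp.memLp f).smul hφ).toLp (φ • ⇑f) := rfl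
  rw [hrfl, Lp.norm_toLp (φ • ⇑f) ((Lp.memLp f).smul hφ), Lp.norm_def]
  have hb : eLpNorm (φ • ⇑f) 2 μc ≤ eLpNorm φ ∞ μc * eLpNorm (⇑f) 2 μc :=
    eLpNorm_smul_le_eLpNorm_top_mul_eLpNorm 2 (Lp.aestronglyMeasurable f) φ
  have hfin : eLpNorm φ ∞ μc * eLpNorm (⇑f) 2 μc ≠ ∞ :=
    ENNReal.mul_ne_top hφ.eLpNorm_ne_top (Lp.eLpNorm_ne_top f)
  calc (eLpNorm (φ • ⇑f) 2 μc).toReal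
      ≤ (eLpNorm φ ∞ μc * eLpNorm (⇑f) 2 μc).toReal := ENNReal.toReal_mono hfin hb
    _ = (eLpNorm φ ∞ μc).toReal * (eLpNorm (⇑f) 2 μc).toReal := ENNReal.toReal_mul

/-- The multiplication (Laurent) operator `M_φ` on `L²(𝕋)` with symbol `φ ∈ L∞(𝕋)`. -/
def Mop (φ : 𝕋c → ℂ) (hφ : MemLp φ ∞ μc) : L2 →L[ℂ] L2 :=
  LinearMap.mkContinuous
    { toFun := MopFun φ hφ
      map_add' := MopFun_add φ hφ
      map_smul' := MopFun_smul φ hφ }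
    (eLpNorm φ ∞ μc).toReal
    (fun f => MopFun_norm φ hφ f)

theorem Mop_coeFn (φ : 𝕋c → ℂ) (hφ : MemLp φ ∞ μc) (f : L2) :
    ⇑(Mop φ hφ f) =ᵐ[μc] fun x => φ x * f x :=
  MopFun_coeFn φ hφ f

/-- The conjugation operator `J : L²(𝕋) → L²(𝕋)`, `(Jf)(z) = f(z̄)`
(composition with `x ↦ -x` on the additive circle). -/
def Jop : L2 →L[ℂ] L2 :=
  LinearMap.mkContinuous
    { toFun := fun f =>
        Lp.compMeasurePreserving (fun x : 𝕋c => -x) (Measure.measurePreserving_neg μc) f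
      map_add' := by
        intro f g
        exact map_add (Lp.compMeasurePreserving _ (Measure.measurePreserving_neg μc)) f g
      map_smul' := by
        intro c f
        apply Lp.ext
        simp only [RingHom.id_apply]
        have hmp := Measure.measurePreserving_neg (μ := μc)
        have h1 := Lp.coeFn_compMeasurePreserving (μ := μc) (c • f) hmp
        have h2 := Lp.coeFn_compMeasurePreserving (μ := μc) f hmp
        have h3 : ⇑(c • f) ∘ (fun x : 𝕋c => -x) =ᵐ[μc] (c • ⇑f) ∘ (fun x : 𝕋c => -x) :=
          hmp.quasiMeasurePreserving.ae_eq_comp (Lp.coeFn_smul c f)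
        have h4 : (c • ⇑f) ∘ (fun x : 𝕋c => -x) = c • (⇑f ∘ fun x : 𝕋c => -x) := rfl
        have h5 : c • (⇑f ∘ fun x : 𝕋c => -x) =ᵐ[μc]
            c • ⇑(Lp.compMeasurePreserving (fun x : 𝕋c => -x) hmp f) :=
          h2.symm.const_smul c
        exact ((h1.trans h3).trans ((h4 ▸ h5 : _))).trans (Lp.coeFn_smul c _).symm }
    1
    (by
      intro f
      simp only [LinearMap.coe_mk, AddHom.coe_mk, one_mul]
      exact le_of_eq (Lp.norm_compMeasurePreserving f _))

/-- The Toeplitz operator `T_φ = P₊ M_φ |_{H²}` with symbol `φ ∈ L∞(𝕋)`. -/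
def Toep (φ : 𝕋c → ℂ) (hφ : MemLp φ ∞ μc) : Hardy →L[ℂ] Hardy :=
  (Submodule.orthogonalProjectionOnto Hardy).comp ((Mop φ hφ).comp Hardy.subtypeL)

/-- The Hankel operator `H_φ = P₊ M_φ J |_{H²}` with symbol `φ ∈ L∞(𝕋)`. -/
def Hank (φ : 𝕋c → ℂ) (hφ : MemLp φ ∞ μc) : Hardy →L[ℂ] Hardy :=
  (Submodule.orthogonalProjectionOnto Hardy).comp ((Mop φ hφ).comp (Jop.comp Hardy.subtypeL))

/-- The coordinate function `z` on the circle. -/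
def zFun : 𝕋c → ℂ := fun x => fourier 1 x

theorem zFun_memℒp : MemLp zFun ∞ μc := by
  refine memLp_top_of_bound ((fourier 1).continuous.aestronglyMeasurable) 1
    (Filter.Eventually.of_forall fun x => ?_)
  simp only [zFun, fourier_apply, Circle.norm_coe, le_refl]

/-- The unilateral shift `T_z`. -/
def Tz : Hardy →L[ℂ] Hardy := Toep zFun zFun_memℒp

/-- The bilateral shift `M_z` on `L²(𝕋)`. -/
def Mz : L2 →L[ℂ] L2 := Mop zFun zFun_memℒp

/-- `A` is a Toeplitz + Hankel operator. -/
def IsToepPlusHank (A : Hardy →L[ℂ] Hardy) : Prop :=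
  ∃ (φ ψ : 𝕋c → ℂ) (hφ : MemLp φ ∞ μc) (hψ : MemLp ψ ∞ μc), A = Toep φ hφ + Hank ψ hψ

/-- `φ` belongs to `H^∞`: it is essentially bounded and all its negative Fourier
coefficients vanish. -/
def IsHinf (φ : 𝕋c → ℂ) : Prop :=
  MemLp φ ∞ μc ∧ ∀ n : ℤ, n < 0 → fourierCoeff φ n = 0

/-- `θ` is an inner function: `θ ∈ H^∞` and `|θ| = 1` a.e. on the circle. -/
def IsInner (θ : 𝕋c → ℂ) : Prop :=
  IsHinf θ ∧ ∀ᵐ x ∂μc, ‖θ x‖ = 1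

theorem Mop_norm_of_inner {θ : 𝕋c → ℂ} (hθ : IsInner θ) (f : L2) :
    ‖Mop θ hθ.1.1 f‖ = ‖f‖ := by
  have h1 : ⇑(Mop θ hθ.1.1 f) =ᵐ[μc] θ • ⇑f := MopFun_coeFn θ hθ.1.1 f
  rw [Lp.norm_def, Lp.norm_def]
  congr 1
  rw [eLpNorm_congr_ae h1]
  apply eLpNorm_congr_norm_ae
  filter_upwards [hθ.2] with x hx
  simp [norm_smul, hx]

/-- The (Beurling-type) subspace `θ H²` of the Hardy space, for an inner function `θ`. -/
def thetaSub (θ : 𝕋c → ℂ) (hθ : IsInner θ) : Submodule ℂ Hardy where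
  carrier := {f | ∃ g : Hardy, (f : L2) = Mop θ hθ.1.1 (g : L2)}
  add_mem' := by
    rintro f f' ⟨g, hg⟩ ⟨g', hg'⟩
    exact ⟨g + g', by
      simp only [Submodule.coe_add, hg, hg']
      rw [← map_add]⟩
  zero_mem' := ⟨0, by simp⟩
  smul_mem' := by
    rintro c f ⟨g, hg⟩
    exact ⟨c • g, by
      rw [Submodule.coe_smul, hg, ← (Mop θ hθ.1.1).map_smul]
      rfl⟩

theorem isClosed_thetaSub (θ : 𝕋c → ℂ) (hθ : IsInner θ) :
    IsClosed ((thetaSub θ hθ) : Set Hardy) := by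
  have hiso : Isometry (fun g : Hardy => Mop θ hθ.1.1 (g : L2)) := by
    apply Isometry.of_dist_eq
    intro g g'
    rw [dist_eq_norm, dist_eq_norm, ← map_sub, ← Submodule.coe_sub, Mop_norm_of_inner hθ]
    rfl
  have hrange : IsClosed (Set.range fun g : Hardy => Mop θ hθ.1.1 (g : L2)) :=
    hiso.isClosedEmbedding.isClosed_range
  have hset : ((thetaSub θ hθ) : Set Hardy) =
      (Subtype.val) ⁻¹' (Set.range fun g : Hardy => Mop θ hθ.1.1 (g : L2)) := by
    ext f
    constructor
    · rintro ⟨g, hg⟩; exact ⟨g, hg.symm⟩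
    · rintro ⟨g, hg⟩; exact ⟨g, hg.symm⟩
  rw [hset]
  exact hrange.preimage continuous_subtype_val

/-- The model space `𝒦_θ = H² ⊖ θH²`. -/
def modelSpace (θ : 𝕋c → ℂ) (hθ : IsInner θ) : Submodule ℂ Hardy := (thetaSub θ hθ)ᗮ

/-- The orthogonal projection of `H²` onto `θH²`. -/
def Ptheta (θ : 𝕋c → ℂ) (hθ : IsInner θ) : Hardy →L[ℂ] Hardy :=
  haveI : CompleteSpace (thetaSub θ hθ) := (isClosed_thetaSub θ hθ).completeSpace_coe
  (thetaSub θ hθ).subtypeL.comp (Submodule.orthogonalProjectionOnto (thetaSub θ hθ))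

/-- The orthogonal projection of `H²` onto the model space `𝒦_θ`. -/
def Pmodel (θ : 𝕋c → ℂ) (hθ : IsInner θ) : Hardy →L[ℂ] Hardy :=
  haveI hc : CompleteSpace (thetaSub θ hθ) := (isClosed_thetaSub θ hθ).completeSpace_coe
  haveI h2 : Submodule.HasOrthogonalProjection (modelSpace θ hθ) :=
    (inferInstance : Submodule.HasOrthogonalProjection (thetaSub θ hθ)ᗮ)
  (modelSpace θ hθ).subtypeL.comp (Submodule.orthogonalProjectionOnto (modelSpace θ hθ))

/-- The monomial `z^k`, as an element of the Hardy space. -/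
def monoH (k : ℕ) : Hardy :=
  ⟨fourierLp 2 (k : ℤ), by
    intro n hn
    rw [← fourierBasis_repr]
    have hb : (fourierLp 2 (k : ℤ) : L2) = fourierBasis (k : ℤ) := by rw [coe_fourierBasis]
    rw [hb, fourierBasis.repr_self]
    exact lp.single_apply_ne 2 (k : ℤ) _ (by omega)⟩

/-- `T_z^*`, the adjoint of the unilateral shift. -/
def TzStar : Hardy →L[ℂ] Hardy := ContinuousLinearMap.adjoint Tz

/-- `M_z^*`, the adjoint of the bilateral shift. -/
def MzStar : L2 →L[ℂ] L2 := ContinuousLinearMap.adjoint Mz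

/-- The constant function `1` as an element of `L²(𝕋)`. -/
def oneL2 : L2 := (memLp_const (1 : ℂ)).toLp (fun _ => (1 : ℂ))

/-- The function `z̄ = conj z` on the circle. -/
def zbarFun : 𝕋c → ℂ := fun x => fourier (-1) x

theorem zbarFun_memℒp : MemLp zbarFun ∞ μc := by
  refine memLp_top_of_bound ((fourier (-1)).continuous.aestronglyMeasurable) 1
    (Filter.Eventually.of_forall fun x => ?_)
  simp only [zbarFun, fourier_apply, Circle.norm_coe, le_refl]

/-- The function `z̄` as an element of `L²(𝕋)`. -/
def zbarL2 : L2 := (zbarFun_memℒp.mono_exponent le_top).toLp zbarFun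

theorem zbarsq_memℒp {ψ : 𝕋c → ℂ} (hψ : MemLp ψ ∞ μc) :
    MemLp (fun x : 𝕋c => ((starRingEnd ℂ) (zFun x) ^ 2 - 1) * ψ x) ∞ μc := by
  have hc : Continuous fun x : 𝕋c => (starRingEnd ℂ) (zFun x) ^ 2 - 1 := by
    have h1 : Continuous (zFun) := (fourier 1).continuous
    exact ((h1.star.pow 2).sub continuous_const)
  have hb : MemLp (fun x : 𝕋c => (starRingEnd ℂ) (zFun x) ^ 2 - 1) ∞ μc := by
    refine memLp_top_of_bound hc.aestronglyMeasurable 2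
      (Filter.Eventually.of_forall fun x => ?_)
    calc ‖(starRingEnd ℂ) (zFun x) ^ 2 - 1‖ ≤ ‖(starRingEnd ℂ) (zFun x) ^ 2‖ + ‖(1 : ℂ)‖ :=
          norm_sub_le _ _
      _ ≤ 2 := by
          rw [norm_pow, RCLike.norm_conj]
          simp only [zFun, fourier_apply, Circle.norm_coe, norm_one]
          norm_num
  have h2 := hψ.smul (r := ∞) hb
  have h3 : ((fun x : 𝕋c => (starRingEnd ℂ) (zFun x) ^ 2 - 1) • ψ) =
      fun x : 𝕋c => ((starRingEnd ℂ) (zFun x) ^ 2 - 1) * ψ x := by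
    funext x
    simp only [Pi.smul_apply, smul_eq_mul, Pi.mul_apply]
  exact h3 ▸ h2

/-- `A` is `θ`-paired: `A = T_φ P_{θH²} + T_ψ P_{𝒦_θ}` for some `φ, ψ ∈ H^∞`. -/
def IsThetaPaired (θ : 𝕋c → ℂ) (hθ : IsInner θ) (X : Hardy →L[ℂ] Hardy) : Prop :=
  ∃ (φ ψ : 𝕋c → ℂ) (hφ : IsHinf φ) (hψ : IsHinf ψ),
    X = (Toep φ hφ.1).comp (Ptheta θ hθ) + (Toep ψ hψ.1).comp (Pmodel θ hθ)


section AnalyticPart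

open Filter Topology

private theorem fourierLp_mem_Hardy {n : ℤ} (hn : 0 ≤ n) : (fourierLp 2 n : L2) ∈ Hardy := by
  intro m hm
  rw [← fourierBasis_repr]
  have hb : (fourierLp 2 n : L2) = fourierBasis n := by rw [coe_fourierBasis]
  rw [hb, fourierBasis.repr_self]
  exact lp.single_apply_ne 2 n _ (by omega)

private theorem fourierLp_mem_orth {n : ℤ} (hn : n < 0) : (fourierLp 2 n : L2) ∈ Hardyᗮ := by
  rw [Submodule.mem_orthogonal']
  intro g hg
  have hb : (fourierLp 2 n : L2) = fourierBasis n := by rw [coe_fourierBasis]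
  rw [hb, ← fourierBasis.repr_apply_apply, fourierBasis_repr]
  exact hg n hn

private theorem Pplus_eq_self {f : L2} (hf : f ∈ Hardy) : Pplus f = f := by
  show ((Submodule.orthogonalProjectionOnto Hardy f : Hardy) : L2) = f
  exact Hardy.starProjection_eq_self_iff.mpr hf

private theorem Pplus_eq_zero {f : L2} (hf : f ∈ Hardyᗮ) : Pplus f = 0 := by
  show ((Submodule.orthogonalProjectionOnto Hardy f : Hardy) : L2) = 0
  rw [Submodule.orthogonalProjectionOnto_apply_of_mem_orthogonal hf,
    Submodule.coe_zero]

private theorem Mz_fourierLp (n : ℤ) : Mz (fourierLp 2 n) = fourierLp 2 (n + 1) := by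
  apply Lp.ext
  filter_upwards [Mop_coeFn zFun zFun_memℒp (fourierLp 2 n), coeFn_fourierLp 2 n,
    coeFn_fourierLp 2 (n + 1)] with x h1 h2 h3
  show (Mop zFun zFun_memℒp (fourierLp 2 n)) x = _
  rw [h1, h2, h3, show n + 1 = 1 + n from add_comm n 1, fourier_add]
  rfl

private theorem oneL2_eq : oneL2 = fourierLp 2 (0 : ℤ) := by
  apply Lp.ext
  filter_upwards [MemLp.coeFn_toLp (memLp_const (1 : ℂ)),
    coeFn_fourierLp (T := 2 * Real.pi) 2 0] with x h1 h2
  show ((memLp_const (1 : ℂ)).toLp fun _ => (1 : ℂ)) x = _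
  rw [h1, h2, fourier_zero]

variable {X : L2 →L[ℂ] L2}

private theorem X_comm (h : X.comp (Mz.comp Pplus) = Mz.comp (X.comp Pplus))
    {f : L2} (hf : f ∈ Hardy) : X (Mz f) = Mz (X f) := by
  have h' := congrArg (fun T : L2 →L[ℂ] L2 => T f) h
  simp only [ContinuousLinearMap.comp_apply] at h'
  rwa [Pplus_eq_self hf] at h'

private theorem X_fourier (h : X.comp (Mz.comp Pplus) = Mz.comp (X.comp Pplus)) :
    ∀ n : ℕ, ⇑(X (fourierLp 2 (n : ℤ))) =ᵐ[μc] fun x => fourier (n : ℤ) x * (X oneL2) x := by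
  intro n
  induction n with
  | zero =>
    simp only [Nat.cast_zero]
    rw [← oneL2_eq]
    filter_upwards with x
    rw [fourier_zero, one_mul]
  | succ n ih =>
    have hmem : (fourierLp 2 (n : ℤ) : L2) ∈ Hardy := fourierLp_mem_Hardy (by positivity)
    have hstep : X (fourierLp 2 ((n : ℤ) + 1)) = Mz (X (fourierLp 2 (n : ℤ))) := by
      rw [← Mz_fourierLp]
      exact X_comm h hmem
    have hcast : ((n + 1 : ℕ) : ℤ) = (n : ℤ) + 1 := by push_cast; ring
    rw [hcast, hstep]
    filter_upwards [Mop_coeFn zFun zFun_memℒp (X (fourierLp 2 (n : ℤ))), ih] with x hx1 hx2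
    show (Mop zFun zFun_memℒp (X (fourierLp 2 (n : ℤ)))) x = _
    rw [hx1, hx2, show (n : ℤ) + 1 = 1 + n from add_comm _ 1, fourier_add]
    show fourier 1 x * (fourier (n : ℤ) x * (X oneL2) x) = _
    ring

private theorem X_fourier' (h : X.comp (Mz.comp Pplus) = Mz.comp (X.comp Pplus))
    (n : ℤ) (hn : 0 ≤ n) :
    ⇑(X (fourierLp 2 n)) =ᵐ[μc] fun x => fourier n x * (X oneL2) x := by
  obtain ⟨m, rfl⟩ := Int.eq_ofNat_of_zero_le hn
  exact X_fourier h m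

private theorem coeFn_finsetSum {ι : Type*} (s : Finset ι) (f : ι → L2) (F : ι → 𝕋c → ℂ)
    (hI : ∀ i ∈ s, ⇑(f i) =ᵐ[μc] F i) :
    ⇑(∑ i ∈ s, f i) =ᵐ[μc] fun x => ∑ i ∈ s, F i x := by
  classical
  revert hI
  refine Finset.induction_on s ?_ ?_
  · intro _
    simp only [Finset.sum_empty]
    filter_upwards [Lp.coeFn_zero ℂ 2 μc] with x hx
    simpa using hx
  · intro a t ha ih hI
    simp only [Finset.sum_insert ha]
    filter_upwards [Lp.coeFn_add (f a) (∑ i ∈ t, f i),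
      ih fun i hi => hI i (Finset.mem_insert_of_mem hi),
      hI a (Finset.mem_insert_self a t)] with x hx1 hx2 hx3
    rw [hx1, Pi.add_apply, hx2, hx3]

private def trigP (c : ℤ →₀ ℂ) : 𝕋c → ℂ := fun x => ∑ k ∈ c.support, c k * fourier k x

private theorem trigP_continuous (c : ℤ →₀ ℂ) : Continuous (trigP c) :=
  continuous_finset_sum _ fun k _ => continuous_const.mul (fourier k).continuous

private theorem lintegral_sq (f : 𝕋c → ℂ) :
    ∫⁻ x, (‖f x‖₊ : ℝ≥0∞) ^ 2 ∂μc = eLpNorm f 2 μc ^ 2 := by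
  rw [eLpNorm_eq_lintegral_rpow_enorm_toReal two_ne_zero ENNReal.ofNat_ne_top,
    ← ENNReal.rpow_natCast _ 2, ← ENNReal.rpow_mul]
  norm_num
  rfl

private theorem eLpNorm_L2_eq (g : L2) : eLpNorm (⇑g) 2 μc = ENNReal.ofReal ‖g‖ := by
  rw [Lp.norm_def, ENNReal.ofReal_toReal (Lp.eLpNorm_ne_top g)]

private theorem lint_of_ae (v : L2) (f : 𝕋c → ℂ) (hv : ⇑v =ᵐ[μc] f) :
    ∫⁻ x, (‖f x‖₊ : ℝ≥0∞) ^ 2 ∂μc = ENNReal.ofReal ‖v‖ ^ 2 := by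
  rw [lintegral_sq, ← eLpNorm_congr_ae hv, eLpNorm_L2_eq]

private theorem nnnorm_fourier (n : ℤ) (x : 𝕋c) : ‖(fourier n x : ℂ)‖₊ = 1 := by
  have hn : ‖(fourier n x : ℂ)‖ = 1 := by
    simp only [fourier_apply]
    exact Circle.norm_coe _
  apply NNReal.coe_injective
  rw [coe_nnnorm, hn, NNReal.coe_one]

private theorem key_ineq (h : X.comp (Mz.comp Pplus) = Mz.comp (X.comp Pplus)) (c : ℤ →₀ ℂ) :
    ∫⁻ x, (‖(X oneL2) x‖₊ : ℝ≥0∞) ^ 2 * (‖trigP c x‖₊ : ℝ≥0∞) ^ 2 ∂μc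
      ≤ ENNReal.ofReal (‖X‖ ^ 2) * ∫⁻ x, (‖trigP c x‖₊ : ℝ≥0∞) ^ 2 ∂μc := by
  classical
  set N : ℕ := c.support.sup fun k => (-k).toNat with hN
  have hkN : ∀ k ∈ c.support, 0 ≤ k + (N : ℤ) := by
    intro k hk
    have h1 : (-k) ≤ ((-k).toNat : ℤ) := Int.self_le_toNat _
    have h2 : (((-k).toNat : ℕ) : ℤ) ≤ (N : ℤ) := by
      exact_mod_cast Finset.le_sup (f := fun k => (-k).toNat) hk
    omega
  set w : L2 := ∑ k ∈ c.support, c k • (fourierLp 2 (k + (N : ℤ)) : L2) with hw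
  have hwcoe : ⇑w =ᵐ[μc] fun x => fourier (N : ℤ) x * trigP c x := by
    have base : ∀ k ∈ c.support, ⇑(c k • (fourierLp 2 (k + (N : ℤ)) : L2)) =ᵐ[μc]
        fun x => c k * fourier (k + (N : ℤ)) x := by
      intro k hk
      filter_upwards [Lp.coeFn_smul (c k) (fourierLp 2 (k + (N : ℤ)) : L2),
        coeFn_fourierLp 2 (k + (N : ℤ))] with x h1 h2
      rw [h1, Pi.smul_apply, h2, smul_eq_mul]
    refine (coeFn_finsetSum _ _ _ base).trans (Filter.Eventually.of_forall fun x => ?_)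
    simp only [trigP, Finset.mul_sum]
    exact Finset.sum_congr rfl fun k hk => by rw [fourier_add]; ring
  have hXw : ⇑(X w) =ᵐ[μc] fun x => fourier (N : ℤ) x * (trigP c x * (X oneL2) x) := by
    have hXsum : X w = ∑ k ∈ c.support, c k • X (fourierLp 2 (k + (N : ℤ))) := by
      rw [hw, map_sum]
      exact Finset.sum_congr rfl fun k _ => X.map_smul _ _
    rw [hXsum]
    have base : ∀ k ∈ c.support, ⇑(c k • X (fourierLp 2 (k + (N : ℤ)))) =ᵐ[μc]
        fun x => c k * (fourier (k + (N : ℤ)) x * (X oneL2) x) := by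
      intro k hk
      filter_upwards [Lp.coeFn_smul (c k) (X (fourierLp 2 (k + (N : ℤ)))),
        X_fourier' h (k + (N : ℤ)) (hkN k hk)] with x h1 h2
      rw [h1, Pi.smul_apply, h2, smul_eq_mul]
    refine (coeFn_finsetSum _ _ _ base).trans (Filter.Eventually.of_forall fun x => ?_)
    simp only [trigP, Finset.mul_sum, Finset.sum_mul]
    refine Finset.sum_congr rfl fun k hk => by rw [fourier_add]; ring
  have hL : ∫⁻ x, (‖(X oneL2) x‖₊ : ℝ≥0∞) ^ 2 * (‖trigP c x‖₊ : ℝ≥0∞) ^ 2 ∂μc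
      = ENNReal.ofReal ‖X w‖ ^ 2 := by
    rw [← lint_of_ae (X w) _ hXw]
    refine lintegral_congr fun x => ?_
    rw [nnnorm_mul, nnnorm_fourier, one_mul, nnnorm_mul, ENNReal.coe_mul, mul_pow]
    ring
  have hR : ∫⁻ x, (‖trigP c x‖₊ : ℝ≥0∞) ^ 2 ∂μc = ENNReal.ofReal ‖w‖ ^ 2 := by
    rw [← lint_of_ae w _ hwcoe]
    refine lintegral_congr fun x => ?_
    rw [nnnorm_mul, nnnorm_fourier, one_mul]
  rw [hL, hR]
  calc ENNReal.ofReal ‖X w‖ ^ 2 ≤ ENNReal.ofReal (‖X‖ * ‖w‖) ^ 2 := by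
        gcongr
        exact X.le_opNorm w
    _ = ENNReal.ofReal (‖X‖ ^ 2) * ENNReal.ofReal ‖w‖ ^ 2 := by
        rw [ENNReal.ofReal_mul (norm_nonneg X), mul_pow, ← ENNReal.ofReal_pow (norm_nonneg X)]

private theorem ae_bound (h : X.comp (Mz.comp Pplus) = Mz.comp (X.comp Pplus)) :
    ∀ᵐ x ∂μc, ‖(X oneL2) x‖ ≤ ‖X‖ := by
  set φ : 𝕋c → ℂ := ⇑(X oneL2) with hφdef
  have hφm : StronglyMeasurable φ := Lp.stronglyMeasurable _
  have key : ∀ ε : ℝ, 0 < ε → μc {x | ‖X‖ + ε ≤ ‖φ x‖} = 0 := by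
    intro ε hε
    set E := {x | ‖X‖ + ε ≤ ‖φ x‖} with hE
    have hEm : MeasurableSet E := measurableSet_le measurable_const hφm.measurable.norm
    by_contra hne
    have hg : MemLp (E.indicator fun _ => (1 : ℂ)) 2 μc :=
      memLp_indicator_const 2 hEm 1 (Or.inr (measure_ne_top μc E))
    set G : L2 := hg.toLp _ with hG
    have hdense : Dense ((Submodule.span ℂ (Set.range fun n : ℤ => (fourierLp 2 n : L2))) : Set L2) := by
      have hd := Submodule.dense_iff_topologicalClosure_eq_top.mpr
        ((fourierBasis (T := 2 * Real.pi)).dense_span)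
      rwa [coe_fourierBasis (T := 2 * Real.pi)] at hd
    obtain ⟨u, hu_mem, hu_tend⟩ := mem_closure_iff_seq_limit.mp (hdense G)
    have hcoef : ∀ j : ℕ, ∃ c : ℤ →₀ ℂ, ⇑(u j) =ᵐ[μc] trigP c := by
      intro j
      obtain ⟨c, hc⟩ := Finsupp.mem_span_range_iff_exists_finsupp.mp (hu_mem j)
      refine ⟨c, ?_⟩
      rw [← hc]
      have hrfl : (c.sum fun i a => a • (fourierLp 2 i : L2))
          = ∑ i ∈ c.support, c i • (fourierLp 2 i : L2) := rfl
      rw [hrfl]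
      refine coeFn_finsetSum _ _ (fun k x => c k * fourier (T := 2 * Real.pi) k x)
        fun k hk => ?_
      filter_upwards [Lp.coeFn_smul (c k) (fourierLp 2 k : L2), coeFn_fourierLp 2 k] with x h1 h2
      rw [h1, Pi.smul_apply, h2, smul_eq_mul]
    choose cs hcs using hcoef
    have htend2 : Tendsto (fun j => eLpNorm (⇑(u j) - ⇑G) 2 μc) atTop (𝓝 0) := by
      have heq : ∀ j, eLpNorm (⇑(u j) - ⇑G) 2 μc = ENNReal.ofReal ‖u j - G‖ := by
        intro j
        rw [← eLpNorm_L2_eq (u j - G)]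
        exact eLpNorm_congr_ae (Lp.coeFn_sub _ _).symm
      simp_rw [heq]
      have hnorm0 : Tendsto (fun j => ‖u j - G‖) atTop (𝓝 0) := by
        have := tendsto_iff_norm_sub_tendsto_zero.mp hu_tend
        simpa using this
      have hcont := (ENNReal.continuous_ofReal.tendsto 0).comp hnorm0
      simpa [Function.comp_def] using hcont
    have hmeas_in : TendstoInMeasure μc (fun j => ⇑(u j)) atTop ⇑G :=
      tendstoInMeasure_of_tendsto_eLpNorm (p := 2) two_ne_zero
        (fun j => Lp.aestronglyMeasurable _) (Lp.aestronglyMeasurable _) htend2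
    obtain ⟨ns, hns_mono, hns_ae⟩ := hmeas_in.exists_seq_tendsto_ae
    have hae : ∀ᵐ x ∂μc, Tendsto (fun k => (‖trigP (cs (ns k)) x‖₊ : ℝ≥0∞) ^ 2) atTop
        (𝓝 ((‖G x‖₊ : ℝ≥0∞) ^ 2)) := by
      filter_upwards [hns_ae, ae_all_iff.2 hcs] with x hx1 hx2
      have htr : Tendsto (fun k => trigP (cs (ns k)) x) atTop (𝓝 (G x)) :=
        hx1.congr fun k => hx2 (ns k)
      have cont : Continuous fun z : ℂ => ((‖z‖₊ : ℝ≥0∞)) ^ 2 :=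
        (ENNReal.continuous_pow 2).comp (ENNReal.continuous_coe.comp continuous_nnnorm)
      exact (cont.tendsto (G x)).comp htr
    have hmeas_k : ∀ k : ℕ, Measurable fun x =>
        (‖φ x‖₊ : ℝ≥0∞) ^ 2 * (‖trigP (cs (ns k)) x‖₊ : ℝ≥0∞) ^ 2 := by
      intro k
      exact ((hφm.measurable.nnnorm.coe_nnreal_ennreal.pow_const 2)).mul
        (((trigP_continuous _).measurable.nnnorm.coe_nnreal_ennreal).pow_const 2)
    have hGnorm : Tendsto (fun k => ‖u (ns k)‖) atTop (𝓝 ‖G‖) :=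
      (continuous_norm.tendsto G).comp (hu_tend.comp hns_mono.tendsto_atTop)
    have main : ∫⁻ x, (‖φ x‖₊ : ℝ≥0∞) ^ 2 * (‖G x‖₊ : ℝ≥0∞) ^ 2 ∂μc
        ≤ ENNReal.ofReal (‖X‖ ^ 2) * (ENNReal.ofReal ‖G‖) ^ 2 := by
      have heq : ∀ᵐ x ∂μc, (‖φ x‖₊ : ℝ≥0∞) ^ 2 * (‖G x‖₊ : ℝ≥0∞) ^ 2
          = liminf (fun k => (‖φ x‖₊ : ℝ≥0∞) ^ 2 * (‖trigP (cs (ns k)) x‖₊ : ℝ≥0∞) ^ 2) atTop := by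
        filter_upwards [hae] with x hx
        refine (Tendsto.liminf_eq ?_).symm
        exact ENNReal.Tendsto.const_mul hx
          (Or.inr (ENNReal.pow_ne_top ENNReal.coe_ne_top))
      calc ∫⁻ x, (‖φ x‖₊ : ℝ≥0∞) ^ 2 * (‖G x‖₊ : ℝ≥0∞) ^ 2 ∂μc
          = ∫⁻ x, liminf (fun k =>
              (‖φ x‖₊ : ℝ≥0∞) ^ 2 * (‖trigP (cs (ns k)) x‖₊ : ℝ≥0∞) ^ 2) atTop ∂μc :=
            lintegral_congr_ae heq
        _ ≤ liminf (fun k => ∫⁻ x,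
              (‖φ x‖₊ : ℝ≥0∞) ^ 2 * (‖trigP (cs (ns k)) x‖₊ : ℝ≥0∞) ^ 2 ∂μc) atTop :=
            lintegral_liminf_le hmeas_k
        _ ≤ liminf (fun k => ENNReal.ofReal (‖X‖ ^ 2) *
              ∫⁻ x, (‖trigP (cs (ns k)) x‖₊ : ℝ≥0∞) ^ 2 ∂μc) atTop := by
            exact liminf_le_liminf (Filter.Eventually.of_forall fun k => key_ineq h _)
        _ = ENNReal.ofReal (‖X‖ ^ 2) * (ENNReal.ofReal ‖G‖) ^ 2 := by
            have hrw : ∀ k : ℕ, ∫⁻ x, (‖trigP (cs (ns k)) x‖₊ : ℝ≥0∞) ^ 2 ∂μc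
                = ENNReal.ofReal ‖u (ns k)‖ ^ 2 := fun k => lint_of_ae _ _ (hcs (ns k))
            simp_rw [hrw]
            refine Tendsto.liminf_eq ?_
            have : Tendsto (fun k => ENNReal.ofReal ‖u (ns k)‖ ^ 2) atTop
                (𝓝 (ENNReal.ofReal ‖G‖ ^ 2)) :=
              ((ENNReal.continuous_pow 2).tendsto _).comp
                ((ENNReal.continuous_ofReal.tendsto _).comp hGnorm)
            exact ENNReal.Tendsto.const_mul this (Or.inr ENNReal.ofReal_ne_top)
    -- Identify the G-integrals with μc E
    have hGcoe : ⇑G =ᵐ[μc] E.indicator fun _ => (1 : ℂ) := hg.coeFn_toLp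
    have hGind : ∀ᵐ x ∂μc, (‖G x‖₊ : ℝ≥0∞) ^ 2 = E.indicator (fun _ => (1 : ℝ≥0∞)) x := by
      filter_upwards [hGcoe] with x hx
      rw [hx]
      by_cases hxE : x ∈ E <;>
        simp [Set.indicator_of_mem, Set.indicator_of_notMem, hxE]
    have hGsq : (ENNReal.ofReal ‖G‖) ^ 2 = μc E := by
      rw [← eLpNorm_L2_eq G, ← lintegral_sq]
      rw [lintegral_congr_ae hGind, lintegral_indicator hEm]
      simp
    have hLHS : ENNReal.ofReal ((‖X‖ + ε) ^ 2) * μc E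
        ≤ ∫⁻ x, (‖φ x‖₊ : ℝ≥0∞) ^ 2 * (‖G x‖₊ : ℝ≥0∞) ^ 2 ∂μc := by
      have h1 : ∫⁻ x, (‖φ x‖₊ : ℝ≥0∞) ^ 2 * (‖G x‖₊ : ℝ≥0∞) ^ 2 ∂μc
          = ∫⁻ x in E, (‖φ x‖₊ : ℝ≥0∞) ^ 2 ∂μc := by
        rw [← lintegral_indicator hEm]
        refine lintegral_congr_ae ?_
        filter_upwards [hGind] with x hx
        rw [hx]
        by_cases hxE : x ∈ E <;>
          simp [Set.indicator_of_mem, Set.indicator_of_notMem, hxE]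
      rw [h1]
      have h2 : ∀ x ∈ E, ENNReal.ofReal ((‖X‖ + ε) ^ 2) ≤ (‖φ x‖₊ : ℝ≥0∞) ^ 2 := by
        intro x hx
        have hx' : ‖X‖ + ε ≤ ‖φ x‖ := hx
        have : ENNReal.ofReal ((‖X‖ + ε) ^ 2) ≤ ENNReal.ofReal (‖φ x‖ ^ 2) := by
          refine ENNReal.ofReal_le_ofReal ?_
          have h0 : 0 ≤ ‖X‖ + ε := by positivity
          nlinarith [norm_nonneg (φ x)]
        refine this.trans_eq ?_
        rw [ENNReal.ofReal_pow (norm_nonneg _), ofReal_norm]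
        rfl
      calc ENNReal.ofReal ((‖X‖ + ε) ^ 2) * μc E
          = ∫⁻ _ in E, ENNReal.ofReal ((‖X‖ + ε) ^ 2) ∂μc := by
            rw [setLIntegral_const]
        _ ≤ ∫⁻ x in E, (‖φ x‖₊ : ℝ≥0∞) ^ 2 ∂μc :=
            setLIntegral_mono (hφm.measurable.nnnorm.coe_nnreal_ennreal.pow_const 2) h2
    have hfinal : ENNReal.ofReal ((‖X‖ + ε) ^ 2) * μc E ≤ ENNReal.ofReal (‖X‖ ^ 2) * μc E := by
      refine hLHS.trans (main.trans_eq ?_)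
      rw [hGsq]
    have hle := (ENNReal.mul_le_mul_iff_left hne (measure_ne_top μc E)).mp hfinal
    have hle' : (‖X‖ + ε) ^ 2 ≤ ‖X‖ ^ 2 :=
      (ENNReal.ofReal_le_ofReal_iff (by positivity)).mp hle
    nlinarith [norm_nonneg X]
  have hsub : {x | ‖X‖ < ‖φ x‖} ⊆ ⋃ n : ℕ, {x | ‖X‖ + 1 / (n + 1) ≤ ‖φ x‖} := by
    intro x hx
    have hx' : ‖X‖ < ‖φ x‖ := hx
    obtain ⟨n, hn⟩ := exists_nat_one_div_lt (K := ℝ) (sub_pos.mpr hx')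
    exact Set.mem_iUnion.mpr ⟨n, by simp only [Set.mem_setOf_eq]; push_cast; linarith⟩
  have hnull : μc {x | ‖X‖ < ‖φ x‖} = 0 :=
    measure_mono_null hsub (measure_iUnion_null fun n => key _ (by positivity))
  rw [ae_iff]
  have hset : {x | ¬ ‖φ x‖ ≤ ‖X‖} = {x | ‖X‖ < ‖φ x‖} := by
    ext y
    simp only [Set.mem_setOf_eq, not_le]
  rw [hset]
  exact hnull

end AnalyticPart

/-- **Theorem.** If `X M_z P₊ = M_z X P₊` then `φ := X(1)` is (essentially) bounded with
`‖φ‖_∞ ≤ ‖X‖`, and `X P₊ = M_φ P₊`. -/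
theorem analytic_part_of_paired (X : L2 →L[ℂ] L2)
    (h : X.comp (Mz.comp Pplus) = Mz.comp (X.comp Pplus)) :
    ∃ hφ : MemLp (⇑(X oneL2)) ∞ μc,
      (eLpNorm (⇑(X oneL2)) ∞ μc).toReal ≤ ‖X‖ ∧
      X.comp Pplus = (Mop (⇑(X oneL2)) hφ).comp Pplus := by
  have hb := ae_bound h
  have hφ : MemLp (⇑(X oneL2)) ∞ μc :=
    memLp_top_of_bound (Lp.aestronglyMeasurable _) _ hb
  refine ⟨hφ, ?_, ?_⟩
  · have h1 : eLpNorm (⇑(X oneL2)) ∞ μc ≤ ENNReal.ofReal ‖X‖ := by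
      rw [eLpNorm_exponent_top]
      exact eLpNormEssSup_le_of_ae_bound hb
    calc (eLpNorm (⇑(X oneL2)) ∞ μc).toReal
        ≤ (ENNReal.ofReal ‖X‖).toReal := ENNReal.toReal_mono ENNReal.ofReal_ne_top h1
      _ = ‖X‖ := ENNReal.toReal_ofReal (norm_nonneg X)
  · have hdense : Dense ((Submodule.span ℂ (Set.range fun n : ℤ => (fourierLp 2 n : L2))) : Set L2) := by
      have hd := Submodule.dense_iff_topologicalClosure_eq_top.mpr
        ((fourierBasis (T := 2 * Real.pi)).dense_span)
      rwa [coe_fourierBasis (T := 2 * Real.pi)] at hd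
    apply ContinuousLinearMap.ext_on hdense
    intro v hv
    obtain ⟨n, rfl⟩ := hv
    rcases lt_or_ge n 0 with hn | hn
    · have h0 : Pplus (fourierLp 2 n) = 0 := Pplus_eq_zero (fourierLp_mem_orth hn)
      simp only [ContinuousLinearMap.comp_apply, h0, map_zero]
    · have h1 : Pplus (fourierLp 2 n) = fourierLp 2 n := Pplus_eq_self (fourierLp_mem_Hardy hn)
      simp only [ContinuousLinearMap.comp_apply, h1]
      apply Lp.ext
      filter_upwards [X_fourier' h n hn, Mop_coeFn (⇑(X oneL2)) hφ (fourierLp 2 n),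
        coeFn_fourierLp 2 n] with x hx1 hx2 hx3
      rw [hx1, hx2, hx3]
      ring

end PaperTH
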